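/- Suppose α < β are real numbers, B = 0 and b ≠ 0. Then the system f(x) < 0, α ≤ h(x) ≤ β has no solution x ∈ ℝⁿ if and only if there exists a real number ν ≥ 0 such that f(x) + ν·(h(x) − α)·(h(x) − β) ≥ 0 for all x ∈ ℝⁿ. -/

import Mathlib

set_option maxHeartbeats 1000000


open Matrix
open scoped RealInnerProductSpace

/-- The quadratic function `x ↦ xᵀ M x + 2 mᵀ x + r`. -/
noncomputable def qfun {n : ℕ} (M : Matrix (Fin n) (Fin n) ℝ) (m : Fin n → ℝ) (r : ℝ)
    (x : Fin n → ℝ) : ℝ :=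
  x ⬝ᵥ M *ᵥ x + 2 * (m ⬝ᵥ x) + r

private lemma dsym {n : ℕ} {A : Matrix (Fin n) (Fin n) ℝ} (hA : A.IsSymm)
    (x y : Fin n → ℝ) : x ⬝ᵥ A *ᵥ y = y ⬝ᵥ A *ᵥ x := by
  rw [Matrix.dotProduct_mulVec, ← Matrix.mulVec_transpose, hA, dotProduct_comm]

private lemma qfun_expand {n : ℕ} {A : Matrix (Fin n) (Fin n) ℝ} (hA : A.IsSymm)
    (a : Fin n → ℝ) (c : ℝ) (v w : Fin n → ℝ) (s : ℝ) :
    qfun A a c (v + s • w)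
      = (w ⬝ᵥ A *ᵥ w) * s ^ 2 + (2 * (v ⬝ᵥ A *ᵥ w) + 2 * (a ⬝ᵥ w)) * s + qfun A a c v := by
  unfold qfun
  simp only [Matrix.mulVec_add, Matrix.mulVec_smul, dotProduct_add,
    add_dotProduct, dotProduct_smul, smul_dotProduct, smul_eq_mul]
  simp only [dsym hA w v]
  ring

private lemma qfun_diff {n : ℕ} {A : Matrix (Fin n) (Fin n) ℝ} (hA : A.IsSymm)
    (a : Fin n → ℝ) (c : ℝ) (z z₀ w : Fin n → ℝ) (s : ℝ) :
    qfun A a c (z + s • w) - qfun A a c (z₀ + s • w)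
      = (z - z₀) ⬝ᵥ A *ᵥ (z - z₀) + 2 * (z₀ ⬝ᵥ A *ᵥ (z - z₀))
        + 2 * s * (w ⬝ᵥ A *ᵥ (z - z₀)) + 2 * (a ⬝ᵥ (z - z₀)) := by
  unfold qfun
  simp only [Matrix.mulVec_add, Matrix.mulVec_smul, Matrix.mulVec_sub,
    dotProduct_add, add_dotProduct, dotProduct_sub,
    sub_dotProduct, dotProduct_smul, smul_dotProduct, smul_eq_mul]
  simp only [dsym hA w z, dsym hA w z₀, dsym hA z₀ z]
  ring

private lemma lin_nonneg' (q r : ℝ) (H : ∀ t : ℝ, 0 ≤ q * t + r) : q = 0 := by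
  by_contra hq
  have h1 := H ((-r - 1) / q)
  have h2 : q * ((-r - 1) / q) + r = -1 := by field_simp; ring
  linarith

private lemma lead_nonneg' (p q r : ℝ) (H : ∀ t : ℝ, 0 ≤ p * t ^ 2 + q * t + r) : 0 ≤ p := by
  by_contra hp
  push_neg at hp
  set t := max 1 ((|q| + |r| + 1) / (-p)) with ht
  have ht1 : (1:ℝ) ≤ t := le_max_left _ _
  have hp' : (0:ℝ) < -p := by linarith
  have h3 : (|q| + |r| + 1) ≤ t * (-p) := (div_le_iff₀ hp').mp (le_max_right _ _)
  have h4 := H t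
  nlinarith [le_abs_self q, neg_abs_le q, le_abs_self r, neg_abs_le r, abs_nonneg q, abs_nonneg r]

private lemma oneD (p q r t₁ t₂ : ℝ) (h12 : t₁ < t₂)
    (H : ∀ t : ℝ, t₁ ≤ t → t ≤ t₂ → 0 ≤ p * t ^ 2 + q * t + r) :
    ∃ ν : ℝ, 0 ≤ ν ∧ ∀ t : ℝ, 0 ≤ p * t ^ 2 + q * t + r + ν * (t - t₁) * (t - t₂) := by
  obtain ⟨δ, hδdef⟩ : ∃ δ : ℝ, δ = t₂ - t₁ := ⟨_, rfl⟩
  have hδ : 0 < δ := by rw [hδdef]; linarith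
  have hδ2 : (0:ℝ) < δ ^ 2 := by positivity
  obtain ⟨E1, hE1⟩ : ∃ E1 : ℝ, E1 = p * t₁ ^ 2 + q * t₁ + r := ⟨_, rfl⟩
  obtain ⟨E2, hE2⟩ : ∃ E2 : ℝ, E2 = p * t₂ ^ 2 + q * t₂ + r := ⟨_, rfl⟩
  have e1 : 0 ≤ E1 := hE1 ▸ H t₁ le_rfl h12.le
  have e2 : 0 ≤ E2 := hE2 ▸ H t₂ h12.le le_rfl
  obtain ⟨ν, hν⟩ : ∃ ν : ℝ, ν = (E1 + E2) / δ ^ 2 - p := ⟨_, rfl⟩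
  have hν' : ν * δ ^ 2 = E1 + E2 - p * δ ^ 2 := by
    rw [hν]; field_simp
  rcases le_or_gt 0 ν with hν0 | hν0
  · refine ⟨ν, hν0, fun t => ?_⟩
    obtain ⟨P, hP⟩ : ∃ P : ℝ, P = p + ν := ⟨_, rfl⟩
    obtain ⟨Q, hQ⟩ : ∃ Q : ℝ, Q = q - ν * (t₁ + t₂) := ⟨_, rfl⟩
    obtain ⟨R, hR⟩ : ∃ R : ℝ, R = r + ν * (t₁ * t₂) := ⟨_, rfl⟩
    have hexpr : p * t ^ 2 + q * t + r + ν * (t - t₁) * (t - t₂) = P * t ^ 2 + Q * t + R := by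
      rw [hP, hQ, hR]; ring
    have hPval : P * δ ^ 2 = E1 + E2 := by
      rw [hP]; linarith [hν']
    have hPpos : 0 ≤ P := by nlinarith [hPval, hδ2]
    have hdisc : (4 * P * R - Q ^ 2) * δ ^ 2 = 4 * E1 * E2 := by
      rw [hP, hQ, hR]
      subst hE1 hE2 hδdef
      linear_combination (4*p*(t₁*t₂) + 4*r + 2*q*(t₁+t₂) - ν*(t₂-t₁)^2
        - ((p*t₁^2+q*t₁+r) + (p*t₂^2+q*t₂+r) - p*(t₂-t₁)^2)) * hν'
    rw [hexpr]
    rcases eq_or_lt_of_le hPpos with hP0 | hP0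
    · have hE : E1 + E2 = 0 := by nlinarith [hPval, hP0]
      have hE1z : E1 = 0 := by linarith
      have hE2z : E2 = 0 := by linarith
      rw [← hP0, hE1z, hE2z] at hdisc
      have hQz : Q = 0 := by nlinarith [sq_nonneg Q, hδ2, hdisc, sq_nonneg (Q * δ)]
      have h1 : P * t₁ ^ 2 + Q * t₁ + R = E1 := by
        rw [hP, hQ, hR, hE1]; ring
      rw [← hP0, hQz] at h1
      have hRz : R = 0 := by rw [hE1z] at h1; linarith [h1]
      rw [← hP0, hQz, hRz]; norm_num
    · have key : ((2 * P * t + Q) ^ 2 + (4 * P * R - Q ^ 2)) * δ ^ 2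
          = ((2 * P * t + Q) * δ) ^ 2 + 4 * E1 * E2 := by linear_combination hdisc
      have key2 : 0 ≤ ((2 * P * t + Q) ^ 2 + (4 * P * R - Q ^ 2)) * δ ^ 2 := by
        rw [key]
        have h6 : 0 ≤ 4 * E1 * E2 := by nlinarith [mul_nonneg e1 e2]
        nlinarith [sq_nonneg ((2 * P * t + Q) * δ)]
      nlinarith [key2, mul_pos hP0 hδ2]
  · -- ν < 0 : the quadratic is nonneg everywhere; use ν = 0
    have hνneg : E1 + E2 < p * δ ^ 2 := by nlinarith [hν', hδ2]
    have hp : 0 < p := by nlinarith [hδ2]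
    have hv1 : t₁ ≤ -q / (2 * p) := by
      rw [le_div_iff₀ (by linarith : (0:ℝ) < 2 * p)]
      by_contra hcon
      push_neg at hcon
      have hq0 : 0 < q + 2 * p * t₁ := by nlinarith
      subst hE1 hE2 hδdef
      nlinarith [mul_pos (sub_pos.mpr h12) hq0, e1]
    have hv2 : -q / (2 * p) ≤ t₂ := by
      rw [div_le_iff₀ (by linarith : (0:ℝ) < 2 * p)]
      by_contra hcon
      push_neg at hcon
      have hq0 : 0 < -q - 2 * p * t₂ := by nlinarith
      subst hE1 hE2 hδdef
      nlinarith [mul_pos (sub_pos.mpr h12) hq0, e2]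
    have hvert := H (-q / (2 * p)) hv1 hv2
    have hval : p * (-q / (2 * p)) ^ 2 + q * (-q / (2 * p)) + r = r - q ^ 2 / (4 * p) := by
      field_simp; ring
    rw [hval] at hvert
    have h4pr : q ^ 2 ≤ 4 * p * r := by
      have := (div_le_iff₀ (by linarith : (0:ℝ) < 4 * p)).mp (by linarith : q ^ 2 / (4 * p) ≤ r)
      linarith
    exact ⟨0, le_rfl, fun t => by nlinarith [sq_nonneg (2 * p * t + q), hp, h4pr]⟩

private lemma solv' {m : ℕ} (T : EuclideanSpace ℝ (Fin m) →ₗ[ℝ] EuclideanSpace ℝ (Fin m))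
    (hsym : ∀ x y, ⟪T x, y⟫ = ⟪x, T y⟫)
    (v : EuclideanSpace ℝ (Fin m)) (hv : ∀ k, T k = 0 → ⟪v, k⟫ = 0) :
    ∃ z, T z = v := by
  have hvmem : v ∈ (LinearMap.range T)ᗮᗮ := by
    intro w hw
    have hTw : T w = 0 := by
      have h0 : ⟪T w, T w⟫ = 0 := by
        rw [hsym, real_inner_comm]
        exact hw (T (T w)) (LinearMap.mem_range_self T (T w))
      exact inner_self_eq_zero.mp h0
    rw [real_inner_comm]
    exact hv w hTw
  rw [Submodule.orthogonal_orthogonal] at hvmem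
  exact hvmem

private lemma inner_eq_dot {m : ℕ} (x y : EuclideanSpace ℝ (Fin m)) :
    ⟪x, y⟫ = (x : Fin m → ℝ) ⬝ᵥ (y : Fin m → ℝ) := by
  simp [PiLp.inner_apply, dotProduct, RCLike.inner_apply, conj_trivial, mul_comm]

/-- S-lemma with interval bounds in the case `B = 0`, `b ≠ 0`, reformulated with the
single quadratic constraint `(h(x) - α)(h(x) - β) ≤ 0`. -/
theorem s_lemma_interval_linear_constraint (n : ℕ) (hn : 0 < n)
    (A B : Matrix (Fin n) (Fin n) ℝ) (hA : A.IsSymm) (hB : B.IsSymm)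
    (a b : Fin n → ℝ) (c d : ℝ) (α β : ℝ) (hαβ : α < β)
    (hB0 : B = 0) (hb : b ≠ 0) :
    (¬ ∃ x : Fin n → ℝ, qfun A a c x < 0 ∧ α ≤ qfun B b d x ∧ qfun B b d x ≤ β) ↔
      (∃ ν : ℝ, 0 ≤ ν ∧ ∀ x : Fin n → ℝ,
        qfun A a c x + ν * (qfun B b d x - α) * (qfun B b d x - β) ≥ 0) := by
  have hqB : ∀ x, qfun B b d x = 2 * (b ⬝ᵥ x) + d := by
    intro x; unfold qfun; rw [hB0, Matrix.zero_mulVec, dotProduct_zero]; ring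
  constructor
  · intro Hne
    -- basic setup
    have hbb0 : 0 ≤ b ⬝ᵥ b := Finset.sum_nonneg fun i _ => mul_self_nonneg _
    have hbbne : b ⬝ᵥ b ≠ 0 := fun h => hb (dotProduct_self_eq_zero.mp h)
    have hbb : 0 < b ⬝ᵥ b := lt_of_le_of_ne hbb0 (Ne.symm hbbne)
    obtain ⟨u, hu⟩ : ∃ u : Fin n → ℝ, u = (b ⬝ᵥ b)⁻¹ • b := ⟨_, rfl⟩
    have hbu : b ⬝ᵥ u = 1 := by
      rw [hu, dotProduct_smul, smul_eq_mul, inv_mul_cancel₀ hbbne]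
    obtain ⟨s1, hs1⟩ : ∃ s1 : ℝ, s1 = (α - d) / 2 := ⟨_, rfl⟩
    obtain ⟨s2, hs2⟩ : ∃ s2 : ℝ, s2 = (β - d) / 2 := ⟨_, rfl⟩
    have hs12 : s1 < s2 := by rw [hs1, hs2]; linarith
    have hsne : s2 - s1 ≠ 0 := by linarith
    have H : ∀ x : Fin n → ℝ, s1 ≤ b ⬝ᵥ x → b ⬝ᵥ x ≤ s2 → 0 ≤ qfun A a c x := by
      intro x h1 h2
      by_contra hneg
      push_neg at hneg
      refine Hne ⟨x, hneg, ?_, ?_⟩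
      · rw [hqB x]; rw [hs1] at h1; linarith
      · rw [hqB x]; rw [hs2] at h2; linarith
    -- the projection onto the hyperplane b ⬝ᵥ x = 0
    obtain ⟨pr, hpr⟩ : ∃ pr : (Fin n → ℝ) → Fin n → ℝ,
        pr = fun x => x - (b ⬝ᵥ x) • u := ⟨_, rfl⟩
    have hprb : ∀ x, b ⬝ᵥ pr x = 0 := by
      intro x
      rw [hpr]
      simp [dotProduct_sub, dotProduct_smul, hbu]
    have hprfix : ∀ x, b ⬝ᵥ x = 0 → pr x = x := by
      intro x hx; rw [hpr]; simp [hx]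
    have hpridem : ∀ x, pr (pr x) = pr x := fun x => hprfix _ (hprb x)
    have hdecomp : ∀ x, pr x + (b ⬝ᵥ x) • u = x := by
      intro x; rw [hpr]; simp
    have hpradd : ∀ x y, pr (x + y) = pr x + pr y := by
      intro x y; rw [hpr]; simp only [dotProduct_add]; module
    have hprsub : ∀ x y, pr (x - y) = pr x - pr y := by
      intro x y; rw [hpr]; simp only [dotProduct_sub]; module
    have hprsmul : ∀ (t : ℝ) x, pr (t • x) = t • pr x := by
      intro t x; rw [hpr]; simp only [dotProduct_smul, smul_eq_mul]; module
    have hpradj : ∀ x y, pr x ⬝ᵥ y = x ⬝ᵥ pr y := by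
      intro x y
      rw [hpr, hu]
      simp only [sub_dotProduct, dotProduct_sub, smul_dotProduct,
        dotProduct_smul, smul_eq_mul]
      rw [dotProduct_comm x b]
      ring
    -- A is PSD on the hyperplane
    have hPSD : ∀ z, b ⬝ᵥ z = 0 → 0 ≤ z ⬝ᵥ A *ᵥ z := by
      intro z hz
      apply lead_nonneg' (z ⬝ᵥ A *ᵥ z) (2 * ((s1 • u) ⬝ᵥ A *ᵥ z) + 2 * (a ⬝ᵥ z))
        (qfun A a c (s1 • u))
      intro t
      have hb1 : b ⬝ᵥ (s1 • u + t • z) = s1 := by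
        simp [dotProduct_add, dotProduct_smul, hbu, hz]
      have := H (s1 • u + t • z) (by rw [hb1]) (by rw [hb1]; exact hs12.le)
      rwa [qfun_expand hA] at this
    -- the reduced operator
    obtain ⟨Tf, hTf⟩ : ∃ Tf : (Fin n → ℝ) → Fin n → ℝ,
        Tf = fun z => pr (A *ᵥ pr z) := ⟨_, rfl⟩
    have hTfadd : ∀ x y, Tf (x + y) = Tf x + Tf y := by
      intro x y; rw [hTf]; simp only [hpradd, Matrix.mulVec_add]
    have hTfsub : ∀ x y, Tf (x - y) = Tf x - Tf y := by
      intro x y; rw [hTf]; simp only [hprsub, Matrix.mulVec_sub]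
    have hTfsmul : ∀ (t : ℝ) x, Tf (t • x) = t • Tf x := by
      intro t x; rw [hTf]; simp only [hprsmul, Matrix.mulVec_smul]
    have hTfpr : ∀ x, Tf (pr x) = Tf x := by
      intro x; rw [hTf]; simp only [hpridem]
    have hTfadj : ∀ x y, (Tf x) ⬝ᵥ y = x ⬝ᵥ Tf y := by
      intro x y
      rw [hTf]
      calc pr (A *ᵥ pr x) ⬝ᵥ y = (A *ᵥ pr x) ⬝ᵥ pr y := hpradj _ _
        _ = pr y ⬝ᵥ (A *ᵥ pr x) := dotProduct_comm _ _
        _ = pr x ⬝ᵥ (A *ᵥ pr y) := dsym hA _ _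
        _ = x ⬝ᵥ pr (A *ᵥ pr y) := by rw [← hpradj]
    let T : EuclideanSpace ℝ (Fin n) →ₗ[ℝ] EuclideanSpace ℝ (Fin n) :=
      { toFun := fun x => WithLp.toLp 2 (Tf x.ofLp)
        map_add' := fun x y => by simp only [WithLp.ofLp_add, hTfadd, WithLp.toLp_add]
        map_smul' := fun t x => by
          simp only [WithLp.ofLp_smul, hTfsmul, WithLp.toLp_smul, RingHom.id_apply] }
    have hT : ∀ z, T z = WithLp.toLp 2 (Tf z.ofLp) := fun z => rfl
    have hsymT : ∀ x y, ⟪T x, y⟫ = ⟪x, T y⟫ := by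
      intro x y
      rw [inner_eq_dot, inner_eq_dot, hT, hT]
      exact hTfadj x y
    -- kernel orthogonality
    obtain ⟨W, hW⟩ : ∃ W : Fin n → ℝ, W = A *ᵥ u := ⟨_, rfl⟩
    have hker : ∀ s : ℝ, s1 ≤ s → s ≤ s2 → ∀ k : Fin n → ℝ, Tf k = 0 →
        (s • W + a) ⬝ᵥ pr k = 0 := by
      intro s hsl hsr k hk
      have hk'A : pr k ⬝ᵥ (A *ᵥ pr k) = 0 := by
        calc pr k ⬝ᵥ (A *ᵥ pr k) = k ⬝ᵥ pr (A *ᵥ pr k) := hpradj _ _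
          _ = k ⬝ᵥ Tf k := by rw [hTf]
          _ = 0 := by rw [hk, dotProduct_zero]
      have hlin : ∀ t : ℝ, 0 ≤ (2 * ((s • u) ⬝ᵥ A *ᵥ pr k) + 2 * (a ⬝ᵥ pr k)) * t
          + qfun A a c (s • u) := by
        intro t
        have hb1 : b ⬝ᵥ (s • u + t • pr k) = s := by
          simp [dotProduct_add, dotProduct_smul, hbu, hprb]
        have := H (s • u + t • pr k) (by rw [hb1]; exact hsl) (by rw [hb1]; exact hsr)
        rw [qfun_expand hA, hk'A] at this
        linarith [this]
      have hz := lin_nonneg' _ _ hlin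
      have he1 : (s • u) ⬝ᵥ (A *ᵥ pr k) = s * (W ⬝ᵥ pr k) := by
        rw [smul_dotProduct, smul_eq_mul, hW]
        rw [dotProduct_comm (A *ᵥ u) (pr k), dsym hA (pr k) u]
      rw [add_dotProduct, smul_dotProduct, smul_eq_mul]
      rw [he1] at hz
      linarith [hz]
    -- solve for the stationary points
    obtain ⟨z1, hz1⟩ := solv' T hsymT (WithLp.toLp 2 (-(pr (s1 • W + a)))) (by
      intro k hk
      rw [inner_eq_dot]
      rw [WithLp.ofLp_toLp]
      have : (-(pr (s1 • W + a))) ⬝ᵥ k.ofLp = -((s1 • W + a) ⬝ᵥ pr k.ofLp) := by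
        rw [neg_dotProduct, hpradj]
      rw [this, hker s1 le_rfl hs12.le k.ofLp (by simpa [hT] using congrArg WithLp.ofLp hk), neg_zero])
    obtain ⟨z2, hz2⟩ := solv' T hsymT (WithLp.toLp 2 (-(pr (s2 • W + a)))) (by
      intro k hk
      rw [inner_eq_dot]
      rw [WithLp.ofLp_toLp]
      have : (-(pr (s2 • W + a))) ⬝ᵥ k.ofLp = -((s2 • W + a) ⬝ᵥ pr k.ofLp) := by
        rw [neg_dotProduct, hpradj]
      rw [this, hker s2 hs12.le le_rfl k.ofLp (by simpa [hT] using congrArg WithLp.ofLp hk), neg_zero])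
    rw [hT] at hz1 hz2
    obtain ⟨z1', hz1d⟩ : ∃ v : Fin n → ℝ, z1.ofLp = v := ⟨z1.ofLp, rfl⟩
    obtain ⟨z2', hz2d⟩ : ∃ v : Fin n → ℝ, z2.ofLp = v := ⟨z2.ofLp, rfl⟩
    rw [hz1d] at hz1
    rw [hz2d] at hz2
    replace hz1 := congrArg WithLp.ofLp hz1
    replace hz2 := congrArg WithLp.ofLp hz2
    simp only [WithLp.ofLp_toLp] at hz1 hz2
    obtain ⟨zW, hzW⟩ : ∃ zW : Fin n → ℝ, zW = (s2 - s1)⁻¹ • (z2' - z1') := ⟨_, rfl⟩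
    have hprWa : ∀ s : ℝ, pr (s • W + a) = s • pr W + pr a := by
      intro s; rw [hpradd, hprsmul]
    have hTzW : Tf zW = -(pr W) := by
      rw [hzW, hTfsmul, hTfsub, hz1, hz2, hprWa, hprWa]
      rw [show -(s2 • pr W + pr a) - -(s1 • pr W + pr a) = (-(s2 - s1)) • pr W by module]
      rw [smul_smul, show (s2 - s1)⁻¹ * -(s2 - s1) = -1 by field_simp, neg_one_smul]
    obtain ⟨za, hza⟩ : ∃ za : Fin n → ℝ, za = z1' - s1 • zW := ⟨_, rfl⟩
    have hTza : Tf za = -(pr a) := by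
      rw [hza, hTfsub, hTfsmul, hz1, hTzW, hprWa]
      module
    -- the stationarity relation
    have hstat : ∀ (s : ℝ) (v : Fin n → ℝ), b ⬝ᵥ v = 0 →
        (pr za + s • pr zW) ⬝ᵥ (A *ᵥ v) + (s • W + a) ⬝ᵥ v = 0 := by
      intro s v hv
      have hT0 : Tf (pr za + s • pr zW) = -(s • pr W + pr a) := by
        rw [hTfadd, hTfsmul, hTfpr, hTfpr, hTza, hTzW]
        module
      have h1 : Tf (pr za + s • pr zW) ⬝ᵥ v = (pr za + s • pr zW) ⬝ᵥ (A *ᵥ v) := by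
        calc Tf (pr za + s • pr zW) ⬝ᵥ v
            = (pr za + s • pr zW) ⬝ᵥ Tf v := hTfadj _ _
          _ = (pr za + s • pr zW) ⬝ᵥ pr (A *ᵥ pr v) := by rw [hTf]
          _ = (pr za + s • pr zW) ⬝ᵥ pr (A *ᵥ v) := by rw [hprfix v hv]
          _ = pr (pr za + s • pr zW) ⬝ᵥ (A *ᵥ v) := by rw [hpradj]
          _ = (pr za + s • pr zW) ⬝ᵥ (A *ᵥ v) := by
              rw [hpradd, hprsmul, hpridem, hpridem]
      have h2 : (-(s • pr W + pr a)) ⬝ᵥ v = -((s • W + a) ⬝ᵥ v) := by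
        rw [neg_dotProduct, ← hprWa, hpradj, hprfix v hv]
      rw [hT0, h2] at h1
      linarith [h1]
    -- the one-dimensional reduction
    obtain ⟨v1, hv1⟩ : ∃ v1 : Fin n → ℝ, v1 = pr zW + u := ⟨_, rfl⟩
    have hψval : ∀ s : ℝ, qfun A a c (pr za + s • v1)
        = (v1 ⬝ᵥ A *ᵥ v1) * s ^ 2 + (2 * (pr za ⬝ᵥ A *ᵥ v1) + 2 * (a ⬝ᵥ v1)) * s
          + qfun A a c (pr za) := fun s => qfun_expand hA a c (pr za) v1 s
    have hbv1 : b ⬝ᵥ v1 = 1 := by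
      rw [hv1, dotProduct_add, hprb, hbu, zero_add]
    have hbpt : ∀ s : ℝ, b ⬝ᵥ (pr za + s • v1) = s := by
      intro s
      rw [dotProduct_add, hprb, dotProduct_smul, hbv1, zero_add,
        smul_eq_mul, mul_one]
    have hψpos : ∀ s : ℝ, s1 ≤ s → s ≤ s2 →
        0 ≤ (v1 ⬝ᵥ A *ᵥ v1) * s ^ 2 + (2 * (pr za ⬝ᵥ A *ᵥ v1) + 2 * (a ⬝ᵥ v1)) * s
          + qfun A a c (pr za) := by
      intro s hl hr
      rw [← hψval]
      exact H _ (by rw [hbpt]; exact hl) (by rw [hbpt]; exact hr)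
    obtain ⟨ν, hν0, hνall⟩ := oneD _ _ _ s1 s2 hs12 hψpos
    -- lower bound: ψ (b ⬝ᵥ x) ≤ f x
    have hψlb : ∀ x : Fin n → ℝ,
        (v1 ⬝ᵥ A *ᵥ v1) * (b ⬝ᵥ x) ^ 2 + (2 * (pr za ⬝ᵥ A *ᵥ v1) + 2 * (a ⬝ᵥ v1)) * (b ⬝ᵥ x)
          + qfun A a c (pr za) ≤ qfun A a c x := by
      intro x
      obtain ⟨s, hs⟩ : ∃ s : ℝ, s = b ⬝ᵥ x := ⟨_, rfl⟩
      obtain ⟨z0, hz0⟩ : ∃ z0 : Fin n → ℝ, z0 = pr za + s • pr zW := ⟨_, rfl⟩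
      have hxd : x = pr x + s • u := by rw [hs, hdecomp]
      have hpt : pr za + s • v1 = z0 + s • u := by rw [hz0, hv1]; module
      have hdz : b ⬝ᵥ (pr x - z0) = 0 := by
        rw [dotProduct_sub, hprb, hz0, dotProduct_add, hprb,
          dotProduct_smul, hprb]
        simp
      have hdiff := qfun_diff hA a c (pr x) z0 u s
      have hst := hstat s (pr x - z0) hdz
      rw [← hz0] at hst
      have hWterm : (s • W + a) ⬝ᵥ (pr x - z0)
          = s * (u ⬝ᵥ A *ᵥ (pr x - z0)) + a ⬝ᵥ (pr x - z0) := by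
        rw [add_dotProduct, smul_dotProduct, smul_eq_mul, hW,
          dotProduct_comm (A *ᵥ u) _, dsym hA _ u]
      have hpsd := hPSD (pr x - z0) hdz
      have hgx : qfun A a c x = qfun A a c (pr x + s • u) := by rw [← hxd]
      have hgz : qfun A a c (pr za + s • v1) = qfun A a c (z0 + s • u) := by rw [hpt]
      rw [← hs, ← hψval s, hgz, hgx]
      linarith [hdiff, hst, hWterm, hpsd]
    refine ⟨ν / 4, by linarith, fun x => ?_⟩
    have hkey : ν / 4 * (qfun B b d x - α) * (qfun B b d x - β)
        = ν * (b ⬝ᵥ x - s1) * (b ⬝ᵥ x - s2) := by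
      rw [hqB x, hs1, hs2]; ring
    have h1 := hνall (b ⬝ᵥ x)
    have h2 := hψlb x
    rw [ge_iff_le]
    rw [hkey]
    linarith [h1, h2]
  · rintro ⟨ν, hν0, hall⟩ ⟨x, hfx, h1, h2⟩
    have hx := hall x
    nlinarith [hx, hfx, mul_nonneg hν0 (mul_nonneg
      (by linarith : (0:ℝ) ≤ qfun B b d x - α) (by linarith : (0:ℝ) ≤ β - qfun B b d x))]
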